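/- Let U be a finite set. Define, for each equivalence relation R on U, f(R) to be the set of minimal elements (with respect to set inclusion) of the family of nonempty supports of vectors in the null space over the two-element field GF(2) (= ZMod 2) of the matrix representation B(R) of R. Then f is injective (if f(R₁) = f(R₂) then R₁ = R₂) and f preserves intersections: for all equivalence relations R₁, R₂ on U, f(R₁ ∩ R₂) = f(R₁) ∩ f(R₂), where R₁ ∩ R₂ is the equivalence relation with x (R₁ ∩ R₂) y iff x R₁ y and x R₂ y. -/

import Mathlib

/- The matrix representation `B(R)` of an equivalence relation (setoid) `s` over a field `F`. -/
open Classical in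
noncomputable def repMx (F : Type*) [Field F] {α : Type*} (s : Setoid α) :
    Matrix (Quotient s) α F :=
  Matrix.of fun q x => if Quotient.mk s x = q then (1 : F) else 0

/-- The family of nonempty supports of vectors in the null space of `A`. -/
def nullSupports (F : Type*) [Field F] {m n : Type*} [Fintype n] (A : Matrix m n F) :
    Set (Set n) :=
  {S | ∃ v : n → F, v ≠ 0 ∧ A.mulVec v = 0 ∧ S = {i | v i ≠ 0}}

/-- `f(R)`: the set of minimal elements of the family of nonempty supports of vectors in
the null space over `GF(2)` of the matrix representation `B(R)` of `R`. -/
noncomputable def minNullSupports {α : Type*} [Fintype α] (s : Setoid α) : Set (Set α) :=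
  {X | X ∈ nullSupports (ZMod 2) (repMx (ZMod 2) s) ∧
    ∀ Y ∈ nullSupports (ZMod 2) (repMx (ZMod 2) s), Y ⊆ X → Y = X}

lemma exists_partner {α : Type*} [Fintype α] (s : Setoid α) {v : α → ZMod 2}
    (hv : (repMx (ZMod 2) s).mulVec v = 0) {x : α} (hx : v x ≠ 0) :
    ∃ y, y ≠ x ∧ v y ≠ 0 ∧ s.r x y := by
  by_contra h
  push_neg at h
  have h0 := congrFun hv (Quotient.mk s x)
  rw [Matrix.mulVec, dotProduct] at h0
  have : ∑ z, repMx (ZMod 2) s (Quotient.mk s x) z * v z = v x := by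
    rw [Finset.sum_eq_single x]
    · simp [repMx]
    · intro b _ hbx
      by_cases hb : v b = 0
      · simp [hb]
      · have : ¬ s.r x b := h b hbx hb
        simp [repMx]
        intro hq
        exact absurd (s.symm (Quotient.exact hq)) this
    · simp
  rw [this] at h0
  exact hx h0

lemma pair_mem {α : Type*} [Fintype α] (s : Setoid α) {x y : α} (hxy : x ≠ y) (hr : s.r x y) :
    ({x, y} : Set α) ∈ nullSupports (ZMod 2) (repMx (ZMod 2) s) := by
  classical
  refine ⟨fun z => if z = x ∨ z = y then 1 else 0, ?_, ?_, ?_⟩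
  · intro h
    have := congrFun h x
    simp at this
  · funext q
    rw [Matrix.mulVec, dotProduct]
    have hsub : ∀ z ∈ Finset.univ, z ∉ ({x, y} : Finset α) →
        repMx (ZMod 2) s q z * (if z = x ∨ z = y then (1 : ZMod 2) else 0) = 0 := by
      intro z _ hz
      simp only [Finset.mem_insert, Finset.mem_singleton] at hz
      push_neg at hz
      simp [hz.1, hz.2]
    rw [← Finset.sum_subset (Finset.subset_univ {x, y}) hsub, Finset.sum_pair hxy]
    have hq : Quotient.mk s x = Quotient.mk s y := Quotient.sound hr
    simp only [repMx, Matrix.of_apply, hxy, hq]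
    by_cases h : Quotient.mk s y = q <;> simp [h]
    decide
  · ext z
    simp only [Set.mem_insert_iff, Set.mem_singleton_iff, Set.mem_setOf_eq]
    by_cases h : z = x ∨ z = y <;> simp [h]

lemma minNullSupports_eq {α : Type*} [Fintype α] (s : Setoid α) :
    minNullSupports s = {S | ∃ x y, x ≠ y ∧ s.r x y ∧ S = ({x, y} : Set α)} := by
  ext S
  constructor
  · rintro ⟨⟨v, hv0, hvnull, rfl⟩, hmin⟩
    obtain ⟨x, hx⟩ : ∃ x, v x ≠ 0 := by
      by_contra h; push_neg at h
      exact hv0 (funext fun z => h z)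
    obtain ⟨y, hyx, hy, hr⟩ := exists_partner s hvnull hx
    refine ⟨x, y, fun h => hyx h.symm, hr, ?_⟩
    · exact (hmin _ (pair_mem s (fun h => hyx h.symm) hr)
        (fun z hz => by rcases hz with rfl | rfl; exacts [hx, hy])).symm
  · rintro ⟨x, y, hxy, hr, rfl⟩
    refine ⟨pair_mem s hxy hr, ?_⟩
    rintro Y ⟨w, hw0, hwnull, rfl⟩ hsub
    obtain ⟨a, ha⟩ : ∃ a, w a ≠ 0 := by
      by_contra h; push_neg at h
      exact hw0 (funext fun z => h z)
    obtain ⟨b, hba, hb, _⟩ := exists_partner s hwnull ha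
    have haS : a ∈ ({x, y} : Set α) := hsub ha
    have hbS : b ∈ ({x, y} : Set α) := hsub hb
    apply Set.Subset.antisymm hsub
    intro z hz
    rcases haS with rfl | rfl <;> rcases hbS with rfl | rfl <;>
      first
        | exact absurd rfl hba
        | (rcases hz with rfl | rfl; exacts [ha, hb])
        | (rcases hz with rfl | rfl; exacts [hb, ha])

/-- the map `f` sending an equivalence relation `R` on a finite set `U` to
the set of minimal nonempty supports of null-space vectors of `B(R)` over `GF(2)` is
injective and preserves intersections of equivalence relations. -/
theorem minNullSupports_injective_and_inter {α : Type*} [Fintype α] :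
    (∀ s₁ s₂ : Setoid α, minNullSupports s₁ = minNullSupports s₂ → s₁ = s₂) ∧
      (∀ s₁ s₂ s₃ : Setoid α, (∀ x y : α, s₃.r x y ↔ s₁.r x y ∧ s₂.r x y) →
        minNullSupports s₃ = minNullSupports s₁ ∩ minNullSupports s₂) := by
  have key : ∀ (s : Setoid α) (x y : α), x ≠ y →
      (s.r x y ↔ ({x, y} : Set α) ∈ minNullSupports s) := by
    intro s x y hxy
    rw [minNullSupports_eq]
    constructor
    · intro hr; exact ⟨x, y, hxy, hr, rfl⟩
    · rintro ⟨a, b, hab, hr, hpair⟩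
      rw [Set.pair_eq_pair_iff] at hpair
      rcases hpair with ⟨rfl, rfl⟩ | ⟨rfl, rfl⟩
      · exact hr
      · exact s.symm hr
  constructor
  · intro s₁ s₂ h
    ext x y
    by_cases hxy : x = y
    · subst hxy; exact ⟨fun _ => s₂.refl x, fun _ => s₁.refl x⟩
    · rw [key s₁ x y hxy, key s₂ x y hxy, h]
  · intro s₁ s₂ s₃ h
    ext S
    rw [minNullSupports_eq, minNullSupports_eq, minNullSupports_eq]
    constructor
    · rintro ⟨x, y, hxy, hr, rfl⟩
      exact ⟨⟨x, y, hxy, (h x y).mp hr |>.1, rfl⟩, ⟨x, y, hxy, (h x y).mp hr |>.2, rfl⟩⟩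
    · rintro ⟨⟨x, y, hxy, hr1, rfl⟩, ⟨a, b, hab, hr2, hpair⟩⟩
      refine ⟨x, y, hxy, (h x y).mpr ⟨hr1, ?_⟩, rfl⟩
      rw [Set.pair_eq_pair_iff] at hpair
      rcases hpair with ⟨rfl, rfl⟩ | ⟨rfl, rfl⟩
      · exact hr2
      · exact s₂.symm hr2
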